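/- arXiv:2202.03855 — 2 statements merged into one kernel-verified Lean document; each statement's English description precedes it below -/
import Mathlib

section
/- Let γ > 1 and define F : (0,∞) → ℝ by F(M) = (γ+1)/((γ−1)[(γ−1)M²+2]) + (1/2)ln(M²/[(γ−1)M²+2]). Then F is differentiable on (0,∞) with F'(M) = 4M(1−M²)/(M²[(γ−1)M²+2]²); consequently F'(M) > 0 for 0 < M < 1 (subsonic range), F'(M) < 0 for M > 1 (supersonic range), and F is strictly increasing on (0,1) and strictly decreasing on (1,∞). -/
/-- The function `F` governing the dependence of the Mach number on position for
unidimensional steady compressible flows with mass addition (polytropic gas,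
adiabatic exponent `γ > 1`):
`F(M) = (γ+1)/((γ−1)[(γ−1)M²+2]) + (1/2) ln(M²/[(γ−1)M²+2])`. -/
noncomputable def Ffun (γ : ℝ) (M : ℝ) : ℝ :=
  (γ + 1) / ((γ - 1) * ((γ - 1) * M ^ 2 + 2)) +
    (1 / 2) * Real.log (M ^ 2 / ((γ - 1) * M ^ 2 + 2))

lemma Dpos (γ : ℝ) (hγ : 1 < γ) (M : ℝ) : 0 < (γ - 1) * M ^ 2 + 2 := by
  nlinarith [sq_nonneg M]

lemma Ffun_deriv (γ : ℝ) (hγ : 1 < γ) (M : ℝ) (hM : 0 < M) :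
    HasDerivAt (Ffun γ)
      (4 * M * (1 - M ^ 2) / (M ^ 2 * ((γ - 1) * M ^ 2 + 2) ^ 2)) M := by
  have hD := Dpos γ hγ M
  have hDne : (γ - 1) * M ^ 2 + 2 ≠ 0 := ne_of_gt hD
  have hMne : M ≠ 0 := ne_of_gt hM
  have hD' : HasDerivAt (fun M : ℝ => (γ - 1) * M ^ 2 + 2) ((γ - 1) * (2 * M)) M := by
    simpa using (((hasDerivAt_pow 2 M).const_mul (γ - 1)).add_const 2)
  have h1 : HasDerivAt (fun M : ℝ => (γ + 1) / ((γ - 1) * ((γ - 1) * M ^ 2 + 2)))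
      ((0 * ((γ - 1) * ((γ - 1) * M ^ 2 + 2)) - (γ + 1) * ((γ - 1) * ((γ - 1) * (2 * M)))) /
        ((γ - 1) * ((γ - 1) * M ^ 2 + 2)) ^ 2) M := by
    refine (hasDerivAt_const M (γ + 1)).div (hD'.const_mul (γ - 1)) ?_
    exact mul_ne_zero (by linarith) hDne
  have hsq : HasDerivAt (fun M : ℝ => M ^ 2) (2 * M) M := by simpa using hasDerivAt_pow 2 M
  have hq : HasDerivAt (fun M : ℝ => M ^ 2 / ((γ - 1) * M ^ 2 + 2))
      ((2 * M * ((γ - 1) * M ^ 2 + 2) - M ^ 2 * ((γ - 1) * (2 * M))) /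
        ((γ - 1) * M ^ 2 + 2) ^ 2) M := hsq.div hD' hDne
  have hqpos : M ^ 2 / ((γ - 1) * M ^ 2 + 2) ≠ 0 :=
    ne_of_gt (div_pos (pow_pos hM 2) hD)
  have h2 := (hq.log hqpos).const_mul (1 / 2 : ℝ)
  have := h1.add h2
  refine this.congr_deriv ?_
  have hγne : γ - 1 ≠ 0 := by linarith
  field_simp
  ring

/-- For `γ > 1`, `F` is differentiable on `(0,∞)` with
`F'(M) = 4M(1−M²)/(M²[(γ−1)M²+2]²)`; consequently `F' > 0` on the subsonic range
`0 < M < 1`, `F' < 0` on the supersonic range `M > 1`, and `F` is strictly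
increasing on `(0,1)` and strictly decreasing on `(1,∞)`. -/
theorem stmt15 (γ : ℝ) (hγ : 1 < γ) :
    (∀ M : ℝ, 0 < M →
      HasDerivAt (Ffun γ)
        (4 * M * (1 - M ^ 2) / (M ^ 2 * ((γ - 1) * M ^ 2 + 2) ^ 2)) M) ∧
    (∀ M : ℝ, 0 < M → M < 1 →
      0 < 4 * M * (1 - M ^ 2) / (M ^ 2 * ((γ - 1) * M ^ 2 + 2) ^ 2)) ∧
    (∀ M : ℝ, 1 < M →
      4 * M * (1 - M ^ 2) / (M ^ 2 * ((γ - 1) * M ^ 2 + 2) ^ 2) < 0) ∧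
    StrictMonoOn (Ffun γ) (Set.Ioo 0 1) ∧
    StrictAntiOn (Ffun γ) (Set.Ioi 1) := by
  have hder := Ffun_deriv γ hγ
  have hden : ∀ M : ℝ, 0 < M → 0 < M ^ 2 * ((γ - 1) * M ^ 2 + 2) ^ 2 := fun M hM =>
    mul_pos (pow_pos hM 2) (pow_pos (Dpos γ hγ M) 2)
  have hpos : ∀ M : ℝ, 0 < M → M < 1 →
      0 < 4 * M * (1 - M ^ 2) / (M ^ 2 * ((γ - 1) * M ^ 2 + 2) ^ 2) := by
    intro M hM hM1
    exact div_pos (by nlinarith) (hden M hM)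
  have hneg : ∀ M : ℝ, 1 < M →
      4 * M * (1 - M ^ 2) / (M ^ 2 * ((γ - 1) * M ^ 2 + 2) ^ 2) < 0 := by
    intro M hM1
    exact div_neg_of_neg_of_pos (by nlinarith) (hden M (by linarith))
  refine ⟨hder, hpos, hneg, ?_, ?_⟩
  · have hd : ∀ x ∈ interior (Set.Ioo (0:ℝ) 1), 0 < deriv (Ffun γ) x := by
      intro x hx
      rw [interior_Ioo] at hx
      rw [(hder x hx.1).deriv]
      exact hpos x hx.1 hx.2
    exact strictMonoOn_of_deriv_pos (convex_Ioo 0 1)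
      (fun x hx => ((hder x hx.1).differentiableAt.continuousAt).continuousWithinAt) hd
  · have hd : ∀ x ∈ interior (Set.Ioi (1:ℝ)), deriv (Ffun γ) x < 0 := by
      intro x hx
      rw [interior_Ioi] at hx
      rw [(hder x (by linarith [Set.mem_Ioi.mp hx])).deriv]
      exact hneg x hx
    exact strictAntiOn_of_deriv_neg (convex_Ioi 1)
      (fun x hx => ((hder x (by linarith [Set.mem_Ioi.mp hx])).differentiableAt.continuousAt).continuousWithinAt) hd
end

section
/- Let γ > 1, λ ∈ ℝ, let U ⊆ ℝ² be open, let ρ, p : U → (0,∞) and 𝐮 = (u,v) : U → ℝ² be continuously differentiable, and let m : U → ℝ be continuous. Define E = ½|𝐮|² + γp/((γ−1)ρ), A = p·ρ^{−γ}, c² = γp/ρ, M² = |𝐮|²/c², φ₃ = D_𝐮E + λmE, and φ₀ = D_𝐮𝐮 + ∇p/ρ + λm𝐮. Then at every point of U, ((γ−1)/ρ^{γ−1})·(φ₃ − φ₀·𝐮) = D_𝐮A + λγm(1 − ((γ−1)/2)M²)·A. -/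
/-- Partial derivative in the `x`-direction of a function on `ℝ²`. -/
noncomputable def px (f : ℝ × ℝ → ℝ) (z : ℝ × ℝ) : ℝ := fderiv ℝ f z (1, 0)

/-- Partial derivative in the `y`-direction of a function on `ℝ²`. -/
noncomputable def py (f : ℝ × ℝ → ℝ) (z : ℝ × ℝ) : ℝ := fderiv ℝ f z (0, 1)

/-- Directional derivative `D_𝐮 f = u ∂ₓ f + v ∂_y f` along the velocity field `𝐮 = (u,v)`. -/
noncomputable def DU (u v f : ℝ × ℝ → ℝ) (z : ℝ × ℝ) : ℝ := u z * px f z + v z * py f z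

/-- For a polytropic gas (`γ > 1`), with `ρ, p > 0` and `𝐮 = (u,v)`
continuously differentiable on an open `U ⊆ ℝ²`, `m` continuous, setting
`E = ½|𝐮|² + γp/((γ−1)ρ)`, `A = p·ρ^{−γ}`, `c² = γp/ρ`, `M² = |𝐮|²/c²`,
`φ₃ = D_𝐮E + λmE` and `φ₀ = D_𝐮𝐮 + ∇p/ρ + λm𝐮`, one has at every point of `U`:
`((γ−1)/ρ^{γ−1})·(φ₃ − φ₀·𝐮) = D_𝐮A + λγm(1 − ((γ−1)/2)M²)·A`. -/
theorem stmt18 (γ lam : ℝ) (hγ : 1 < γ) (U : Set (ℝ × ℝ)) (hU : IsOpen U)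
    (ρ p u v m : ℝ × ℝ → ℝ)
    (hρpos : ∀ z ∈ U, 0 < ρ z) (hppos : ∀ z ∈ U, 0 < p z)
    (hρ : ContDiffOn ℝ 1 ρ U) (hp : ContDiffOn ℝ 1 p U)
    (hu : ContDiffOn ℝ 1 u U) (hv : ContDiffOn ℝ 1 v U)
    (hm : ContinuousOn m U) :
    ∀ z ∈ U,
      ((γ - 1) / ρ z ^ (γ - 1)) *
          ((DU u v (fun w => (u w ^ 2 + v w ^ 2) / 2 + γ * p w / ((γ - 1) * ρ w)) z
              + lam * m z * ((u z ^ 2 + v z ^ 2) / 2 + γ * p z / ((γ - 1) * ρ z)))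
            - ((DU u v u z + px p z / ρ z + lam * m z * u z) * u z
                + (DU u v v z + py p z / ρ z + lam * m z * v z) * v z))
        = DU u v (fun w => p w * ρ w ^ (-γ)) z
            + lam * γ * m z *
              (1 - ((γ - 1) / 2) * ((u z ^ 2 + v z ^ 2) / (γ * p z / ρ z))) *
              (p z * ρ z ^ (-γ)) := by
  intro z hz
  have hzU : U ∈ nhds z := hU.mem_nhds hz
  have hρd : DifferentiableAt ℝ ρ z := (hρ.differentiableOn one_ne_zero).differentiableAt hzU
  have hpd : DifferentiableAt ℝ p z := (hp.differentiableOn one_ne_zero).differentiableAt hzU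
  have hud : DifferentiableAt ℝ u z := (hu.differentiableOn one_ne_zero).differentiableAt hzU
  have hvd : DifferentiableAt ℝ v z := (hv.differentiableOn one_ne_zero).differentiableAt hzU
  have hr : 0 < ρ z := hρpos z hz
  have hP : 0 < p z := hppos z hz
  have hγ1 : γ - 1 ≠ 0 := sub_ne_zero.mpr (ne_of_gt hγ)
  have keyfun : (fun w => (u w ^ 2 + v w ^ 2) / 2 + γ * p w / ((γ - 1) * ρ w))
      = (fun w => (1/2) * (u w * u w) + (1/2) * (v w * v w)
          + (γ * (γ - 1)⁻¹) * (p w * ρ w ^ (-1 : ℝ))) := by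
    funext w
    rw [Real.rpow_neg_one, div_eq_mul_inv, div_eq_mul_inv, mul_inv]
    ring
  have hE : HasFDerivAt (fun w => (u w ^ 2 + v w ^ 2) / 2 + γ * p w / ((γ - 1) * ρ w))
      (((1/2 : ℝ) • (u z • fderiv ℝ u z + u z • fderiv ℝ u z)
        + (1/2 : ℝ) • (v z • fderiv ℝ v z + v z • fderiv ℝ v z))
        + (γ * (γ - 1)⁻¹) • (p z • ((-1 * ρ z ^ (-1 - 1 : ℝ)) • fderiv ℝ ρ z)
            + ρ z ^ (-1 : ℝ) • fderiv ℝ p z)) z := by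
    rw [keyfun]
    exact (((hud.hasFDerivAt.mul hud.hasFDerivAt).const_mul (1/2)).add
        ((hvd.hasFDerivAt.mul hvd.hasFDerivAt).const_mul (1/2))).add
      ((hpd.hasFDerivAt.mul (hρd.hasFDerivAt.rpow_const (Or.inl hr.ne'))).const_mul _)
  have hA : HasFDerivAt (fun w => p w * ρ w ^ (-γ))
      (p z • ((-γ * ρ z ^ (-γ - 1)) • fderiv ℝ ρ z) + ρ z ^ (-γ) • fderiv ℝ p z) z :=
    hpd.hasFDerivAt.mul (hρd.hasFDerivAt.rpow_const (Or.inl hr.ne'))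
  simp only [DU, px, py, hE.fderiv, hA.fderiv, ContinuousLinearMap.add_apply,
    ContinuousLinearMap.smul_apply, smul_eq_mul]
  set r := ρ z with hrdef
  have hrγ : r ^ (γ - 1) * r = r ^ γ := by
    rw [← Real.rpow_add_one hr.ne']; ring_nf
  have h1 : r ^ (-γ) = (r ^ (γ - 1) * r)⁻¹ := by
    rw [hrγ, ← Real.rpow_neg hr.le]
  have h2 : r ^ (-γ - 1) = (r ^ (γ - 1) * r ^ 2)⁻¹ := by
    have e : r ^ (γ - 1) * r ^ 2 = r ^ (γ + 1) := by
      rw [sq, ← mul_assoc, ← Real.rpow_add_one hr.ne', ← Real.rpow_add_one hr.ne']; ring_nf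
    rw [e, ← Real.rpow_neg hr.le]; ring_nf
  have h3 : r ^ (-1 : ℝ) = r⁻¹ := Real.rpow_neg_one r
  have h4 : r ^ (-1 - 1 : ℝ) = (r ^ 2)⁻¹ := by
    rw [show (-1 - 1 : ℝ) = -(2 : ℝ) by ring, ← Real.rpow_two, ← Real.rpow_neg hr.le]
  have hs : 0 < r ^ (γ - 1) := Real.rpow_pos_of_pos hr _
  rw [h1, h2, h3, h4]
  field_simp
  ring
end
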